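/- Let l ≥ 1 and let X = {x ∈ ℝ^l : x_i > 0 for all i} be the open positive orthant. Let f : X → ℝ be continuous on X. Then the following are equivalent: (a) for every sequence (x_k)_{k∈ℕ} ⊂ X and every y ∈ X such that y_i ≤ liminf_{k→∞} (x_k)_i for every component i = 1,…,l (the liminf taken in ℝ ∪ {±∞}), one has f(y) ≤ liminf_{k→∞} f(x_k); (b) f is monotonically increasing with respect to the componentwise order, i.e., for all y, z ∈ X with y_i ≤ z_i for every i it holds that f(y) ≤ f(z). -/
import Mathlib


open Filter Topology

/-- Lemma 4.9: for a continuous function `f` on the open positive orthant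
`X = (ℝ_{>0})^l`, the liminf-type lower semicontinuity-from-below property (a)
is equivalent to componentwise monotonicity (b). -/
theorem stmt_0 (l : ℕ) (hl : 1 ≤ l) (f : (Fin l → ℝ) → ℝ)
    (X : Set (Fin l → ℝ)) (hX : X = {x : Fin l → ℝ | ∀ i, 0 < x i})
    (hf : ContinuousOn f X) :
    (∀ (x : ℕ → Fin l → ℝ), (∀ k, x k ∈ X) → ∀ y ∈ X,
        (∀ i : Fin l,
          (y i : EReal) ≤ liminf (fun k => ((x k i : ℝ) : EReal)) atTop) →
        ((f y : EReal) ≤ liminf (fun k => ((f (x k) : ℝ) : EReal)) atTop))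
    ↔
    (∀ y ∈ X, ∀ z ∈ X, (∀ i : Fin l, y i ≤ z i) → f y ≤ f z) := by
  constructor
  · intro h y hy z hz hyz
    have := h (fun _ => z) (fun _ => hz) y hy (fun i => by
      rw [liminf_const]
      exact_mod_cast hyz i)
    rw [liminf_const] at this
    exact_mod_cast this
  · intro hmono x hx y hy hli
    subst hX
    haveI : Nonempty (Fin l) := ⟨⟨0, hl⟩⟩
    set m : ℝ := Finset.univ.inf' Finset.univ_nonempty y with hm
    have hm0 : 0 < m := by
      rw [hm, Finset.lt_inf'_iff]
      exact fun i _ => hy i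
    have hmle : ∀ i, m ≤ y i := fun i =>
      Finset.inf'_le _ (Finset.mem_univ i)
    set L := liminf (fun k => ((f (x k) : ℝ) : EReal)) atTop with hL
    -- key step: for δ ∈ (0, m), f(y - δ) ≤ L
    have key : ∀ δ ∈ Set.Ioo (0:ℝ) m,
        ((f (fun i => y i - δ) : ℝ) : EReal) ≤ L := by
      intro δ hδ
      have hvmem : (fun i => y i - δ) ∈ {x : Fin l → ℝ | ∀ i, 0 < x i} := by
        intro i
        have := hmle i
        show 0 < y i - δ
        linarith [hδ.2]
      have hev : ∀ᶠ k in atTop, ∀ i, y i - δ < x k i := by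
        rw [eventually_all]
        intro i
        have h1 : ((y i - δ : ℝ) : EReal) < liminf (fun k => ((x k i : ℝ) : EReal)) atTop := by
          refine lt_of_lt_of_le ?_ (hli i)
          exact_mod_cast (by linarith [hδ.1] : y i - δ < y i)
        filter_upwards [eventually_lt_of_lt_liminf h1] with k hk
        exact_mod_cast hk
      refine le_liminf_of_le (by isBoundedDefault) ?_
      filter_upwards [hev] with k hk
      have : f (fun i => y i - δ) ≤ f (x k) :=
        hmono _ hvmem _ (hx k) (fun i => le_of_lt (hk i))
      exact_mod_cast this
    -- pass to the limit δ → 0⁺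
    have hne : (𝓝[Set.Ioo (0:ℝ) m] (0:ℝ)).NeBot := by
      apply mem_closure_iff_nhdsWithin_neBot.mp
      rw [closure_Ioo (ne_of_lt hm0)]
      exact Set.left_mem_Icc.mpr hm0.le
    have htv : Tendsto (fun δ : ℝ => (fun i => y i - δ)) (𝓝[Set.Ioo (0:ℝ) m] 0)
        (𝓝[{x : Fin l → ℝ | ∀ i, 0 < x i}] y) := by
      apply tendsto_nhdsWithin_of_tendsto_nhds_of_eventually_within
      · have : Continuous (fun δ : ℝ => (fun i => y i - δ)) := by
          continuity
        have h0 : (fun i => y i - (0:ℝ)) = y := by ext i; ring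
        simpa [h0] using (this.tendsto 0).mono_left nhdsWithin_le_nhds
      · filter_upwards [self_mem_nhdsWithin] with δ hδ i
        have := hmle i
        show 0 < y i - δ
        linarith [hδ.2]
    have htf : Tendsto (fun δ : ℝ => ((f (fun i => y i - δ) : ℝ) : EReal))
        (𝓝[Set.Ioo (0:ℝ) m] 0) (𝓝 ((f y : ℝ) : EReal)) :=
      (continuous_coe_real_ereal.tendsto _).comp
        ((hf.continuousWithinAt (by rw [Set.mem_setOf_eq]; exact hy)).tendsto.comp htv)
    refine le_of_tendsto htf ?_
    filter_upwards [self_mem_nhdsWithin] with δ hδ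
    exact key δ hδ
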